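/- For any small categories A and B, there is a natural isomorphism of categories ~(A × B) ≅ ~A × ~B, where ~C denotes the free groupoid completion (localization at all morphisms) of C — equivalently, the groupoidification functor preserves finite products when applied to the categories [j] and [k̃]: ([j] × [k])~ computed objectwise agrees with [j]~ × [k]~. -/

import Mathlib

open CategoryTheory

universe u

namespace GroupoidificationAux

/-- A functor category into a groupoid is a groupoid. -/
noncomputable instance functorGroupoid (C : Type*) [Category C] (G : Type*) [Groupoid G] :
    Groupoid (C ⥤ G) :=
  Groupoid.ofIsIso fun f => NatIso.isIso_of_isIso_app f

section Currying

variable {C : Type*} {C' : Type*} {D : Type*} {E : Type*}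
  [Category C] [Category C'] [Category D] [Category E]

lemma prod_id_comp_uncurry (K : C' ⥤ C) (X : C ⥤ D ⥤ E) :
    (K.prod (𝟭 D)) ⋙ Functor.uncurry.obj X = Functor.uncurry.obj (K ⋙ X) := rfl

lemma comp_curry (K : C' ⥤ C) (Y : C × D ⥤ E) :
    K ⋙ Functor.curry.obj Y = Functor.curry.obj ((K.prod (𝟭 D)) ⋙ Y) := by
  apply Functor.uncurry_obj_injective
  rw [← prod_id_comp_uncurry, Functor.uncurry_obj_curry_obj, Functor.uncurry_obj_curry_obj]

end Currying

variable (L : Cat.{u, u} ⥤ Grpd.{u, u}) (adj : L ⊣ Grpd.forgetToCat.{u, u})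

/-- Morphisms out of a free groupoid are determined by restriction along the unit. -/
lemma cancelL (X : Cat.{u, u}) {Y : Grpd.{u, u}} (f g : L.obj X ⟶ Y)
    (h : adj.unit.app X ≫ Grpd.forgetToCat.map f = adj.unit.app X ≫ Grpd.forgetToCat.map g) :
    f = g :=
  (adj.homEquiv X Y).injective
    (by rw [Adjunction.homEquiv_unit, Adjunction.homEquiv_unit, h])

variable (A B : Cat.{u, u})

/-- The product category, as an object of `Cat`. -/
abbrev PC : Cat.{u, u} := Cat.of (↑A × ↑B)

/-- First projection as a Cat morphism. -/
def pA : PC A B ⟶ A := (CategoryTheory.Prod.fst ↑A ↑B).toCatHom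

/-- Second projection as a Cat morphism. -/
def pB : PC A B ⟶ B := (CategoryTheory.Prod.snd ↑A ↑B).toCatHom

/-- The comparison functor `~(A × B) ⥤ ~A × ~B`. -/
def Ffun : ↑(L.obj (PC A B)) ⥤ ↑(L.obj A) × ↑(L.obj B) :=
  Functor.prod' (L.map (pA A B)) (L.map (pB A B))

/-- First adjoint transpose: `~A ⟶ Fun(B, ~(A×B))`. -/
noncomputable def g2 : L.obj A ⟶ Grpd.of (↑B ⥤ ↑(L.obj (PC A B))) :=
  (adj.homEquiv A (Grpd.of (↑B ⥤ ↑(L.obj (PC A B))))).symm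
    (Functor.curry.obj (adj.unit.app (PC A B)).toFunctor).toCatHom

lemma e2 : ((adj.unit.app A).toFunctor : ↑A ⥤ ↑(L.obj A)) ⋙
      (g2 L adj A B : ↑(L.obj A) ⥤ (↑B ⥤ ↑(L.obj (PC A B))))
    = Functor.curry.obj (adj.unit.app (PC A B)).toFunctor := by
  have h := (adj.homEquiv A (Grpd.of (↑B ⥤ ↑(L.obj (PC A B))))).apply_symm_apply
    (Functor.curry.obj (adj.unit.app (PC A B)).toFunctor).toCatHom
  rw [Adjunction.homEquiv_unit] at h
  exact congrArg Cat.Hom.toFunctor h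

/-- Uncurried form. -/
noncomputable def g3 : ↑(L.obj A) × ↑B ⥤ ↑(L.obj (PC A B)) :=
  Functor.uncurry.obj (g2 L adj A B : ↑(L.obj A) ⥤ (↑B ⥤ ↑(L.obj (PC A B))))

/-- Second transpose: `~B ⟶ Fun(~A, ~(A×B))`. -/
noncomputable def g5 : L.obj B ⟶ Grpd.of (↑(L.obj A) ⥤ ↑(L.obj (PC A B))) :=
  (adj.homEquiv B (Grpd.of (↑(L.obj A) ⥤ ↑(L.obj (PC A B))))).symm
    (Functor.curry.obj (CategoryTheory.Prod.swap ↑B ↑(L.obj A) ⋙ g3 L adj A B)).toCatHom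

lemma e5 : ((adj.unit.app B).toFunctor : ↑B ⥤ ↑(L.obj B)) ⋙
      (g5 L adj A B : ↑(L.obj B) ⥤ (↑(L.obj A) ⥤ ↑(L.obj (PC A B))))
    = Functor.curry.obj (CategoryTheory.Prod.swap ↑B ↑(L.obj A) ⋙ g3 L adj A B) := by
  have h := (adj.homEquiv B (Grpd.of (↑(L.obj A) ⥤ ↑(L.obj (PC A B))))).apply_symm_apply
    (Functor.curry.obj (CategoryTheory.Prod.swap ↑B ↑(L.obj A) ⋙ g3 L adj A B)).toCatHom
  rw [Adjunction.homEquiv_unit] at h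
  exact congrArg Cat.Hom.toFunctor h

/-- The comparison functor `~A × ~B ⥤ ~(A × B)`. -/
noncomputable def Gfun : ↑(L.obj A) × ↑(L.obj B) ⥤ ↑(L.obj (PC A B)) :=
  CategoryTheory.Prod.swap _ _ ⋙
    Functor.uncurry.obj (g5 L adj A B : ↑(L.obj B) ⥤ (↑(L.obj A) ⥤ ↑(L.obj (PC A B))))

lemma c1 : ((adj.unit.app (PC A B)).toFunctor : ↑(PC A B) ⥤ ↑(L.obj (PC A B))) ⋙ Ffun L A B
    = Functor.prod ((adj.unit.app A).toFunctor : ↑A ⥤ ↑(L.obj A)) ((adj.unit.app B).toFunctor : ↑B ⥤ ↑(L.obj B)) := by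
  have nA : ((adj.unit.app (PC A B)).toFunctor : ↑(PC A B) ⥤ ↑(L.obj (PC A B))) ⋙
        (L.map (pA A B) : ↑(L.obj (PC A B)) ⥤ ↑(L.obj A))
      = ((pA A B).toFunctor : ↑(PC A B) ⥤ ↑A) ⋙ ((adj.unit.app A).toFunctor : ↑A ⥤ ↑(L.obj A)) :=
    congrArg Cat.Hom.toFunctor (adj.unit.naturality (pA A B)).symm
  have nB : ((adj.unit.app (PC A B)).toFunctor : ↑(PC A B) ⥤ ↑(L.obj (PC A B))) ⋙
        (L.map (pB A B) : ↑(L.obj (PC A B)) ⥤ ↑(L.obj B))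
      = ((pB A B).toFunctor : ↑(PC A B) ⥤ ↑B) ⋙ ((adj.unit.app B).toFunctor : ↑B ⥤ ↑(L.obj B)) :=
    congrArg Cat.Hom.toFunctor (adj.unit.naturality (pB A B)).symm
  show Functor.prod'
      (((adj.unit.app (PC A B)).toFunctor : ↑(PC A B) ⥤ ↑(L.obj (PC A B))) ⋙
        (L.map (pA A B) : ↑(L.obj (PC A B)) ⥤ ↑(L.obj A)))
      (((adj.unit.app (PC A B)).toFunctor : ↑(PC A B) ⥤ ↑(L.obj (PC A B))) ⋙
        (L.map (pB A B) : ↑(L.obj (PC A B)) ⥤ ↑(L.obj B))) = _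
  rw [nA, nB]
  rfl

lemma c2 : Functor.prod ((adj.unit.app A).toFunctor : ↑A ⥤ ↑(L.obj A))
        ((adj.unit.app B).toFunctor : ↑B ⥤ ↑(L.obj B)) ⋙ Gfun L adj A B
    = ((adj.unit.app (PC A B)).toFunctor : ↑(PC A B) ⥤ ↑(L.obj (PC A B))) := by
  have eA : (((adj.unit.app B).toFunctor : ↑B ⥤ ↑(L.obj B)).prod (𝟭 ↑(L.obj A))) ⋙
        Functor.uncurry.obj (g5 L adj A B : ↑(L.obj B) ⥤ (↑(L.obj A) ⥤ ↑(L.obj (PC A B))))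
      = CategoryTheory.Prod.swap ↑B ↑(L.obj A) ⋙ g3 L adj A B := by
    erw [prod_id_comp_uncurry, e5, Functor.uncurry_obj_curry_obj]
  have eB : (((adj.unit.app A).toFunctor : ↑A ⥤ ↑(L.obj A)).prod (𝟭 ↑B)) ⋙ g3 L adj A B
      = ((adj.unit.app (PC A B)).toFunctor : ↑(PC A B) ⥤ ↑(L.obj (PC A B))) := by
    show (((adj.unit.app A).toFunctor : ↑A ⥤ ↑(L.obj A)).prod (𝟭 ↑B)) ⋙
        Functor.uncurry.obj (g2 L adj A B : ↑(L.obj A) ⥤ (↑B ⥤ ↑(L.obj (PC A B)))) = _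
    erw [prod_id_comp_uncurry, e2, Functor.uncurry_obj_curry_obj]
  calc Functor.prod ((adj.unit.app A).toFunctor : ↑A ⥤ ↑(L.obj A))
        ((adj.unit.app B).toFunctor : ↑B ⥤ ↑(L.obj B)) ⋙ Gfun L adj A B
      = CategoryTheory.Prod.swap ↑A ↑B ⋙ (((𝟭 ↑B).prod ((adj.unit.app A).toFunctor : ↑A ⥤ ↑(L.obj A))) ⋙
          ((((adj.unit.app B).toFunctor : ↑B ⥤ ↑(L.obj B)).prod (𝟭 ↑(L.obj A))) ⋙
            Functor.uncurry.obj (g5 L adj A B :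
              ↑(L.obj B) ⥤ (↑(L.obj A) ⥤ ↑(L.obj (PC A B)))))) := rfl
    _ = CategoryTheory.Prod.swap ↑A ↑B ⋙ (((𝟭 ↑B).prod ((adj.unit.app A).toFunctor : ↑A ⥤ ↑(L.obj A))) ⋙
          (CategoryTheory.Prod.swap ↑B ↑(L.obj A) ⋙ g3 L adj A B)) := by erw [eA]; rfl
    _ = CategoryTheory.Prod.swap ↑A ↑B ⋙ (CategoryTheory.Prod.swap ↑B ↑A ⋙
          ((((adj.unit.app A).toFunctor : ↑A ⥤ ↑(L.obj A)).prod (𝟭 ↑B)) ⋙ g3 L adj A B)) := rfl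
    _ = CategoryTheory.Prod.swap ↑A ↑B ⋙ (CategoryTheory.Prod.swap ↑B ↑A ⋙
          (show ↑(PC A B) ⥤ ↑(L.obj (PC A B)) from (adj.unit.app (PC A B)).toFunctor)) := by erw [eB]; rfl
    _ = (show ↑A × ↑B ⥤ ↑(L.obj (PC A B)) from (adj.unit.app (PC A B)).toFunctor) := rfl

/-- Functors out of a product of free groupoids into a groupoid are determined by
restriction along the product of the units. -/
lemma prodCancel {X : Type u} [Groupoid.{u} X]
    (f g : ↑(L.obj A) × ↑(L.obj B) ⥤ X)
    (h : Functor.prod ((adj.unit.app A).toFunctor : ↑A ⥤ ↑(L.obj A))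
          ((adj.unit.app B).toFunctor : ↑B ⥤ ↑(L.obj B)) ⋙ f
        = Functor.prod ((adj.unit.app A).toFunctor : ↑A ⥤ ↑(L.obj A))
          ((adj.unit.app B).toFunctor : ↑B ⥤ ↑(L.obj B)) ⋙ g) : f = g := by
  have hW : ((𝟭 ↑(L.obj A)).prod ((adj.unit.app B).toFunctor : ↑B ⥤ ↑(L.obj B))) ⋙ f
      = ((𝟭 ↑(L.obj A)).prod ((adj.unit.app B).toFunctor : ↑B ⥤ ↑(L.obj B))) ⋙ g := by
    have hc := cancelL L adj A (Y := Grpd.of (↑B ⥤ X))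
      (Functor.curry.obj (((𝟭 ↑(L.obj A)).prod ((adj.unit.app B).toFunctor : ↑B ⥤ ↑(L.obj B))) ⋙ f))
      (Functor.curry.obj (((𝟭 ↑(L.obj A)).prod ((adj.unit.app B).toFunctor : ↑B ⥤ ↑(L.obj B))) ⋙ g))
      (Cat.ext (by
        show ((adj.unit.app A).toFunctor : ↑A ⥤ ↑(L.obj A)) ⋙
            Functor.curry.obj (((𝟭 ↑(L.obj A)).prod ((adj.unit.app B).toFunctor : ↑B ⥤ ↑(L.obj B))) ⋙ f)
          = ((adj.unit.app A).toFunctor : ↑A ⥤ ↑(L.obj A)) ⋙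
            Functor.curry.obj (((𝟭 ↑(L.obj A)).prod ((adj.unit.app B).toFunctor : ↑B ⥤ ↑(L.obj B))) ⋙ g)
        rw [comp_curry, comp_curry]
        show Functor.curry.obj (Functor.prod ((adj.unit.app A).toFunctor : ↑A ⥤ ↑(L.obj A))
              ((adj.unit.app B).toFunctor : ↑B ⥤ ↑(L.obj B)) ⋙ f)
          = Functor.curry.obj (Functor.prod ((adj.unit.app A).toFunctor : ↑A ⥤ ↑(L.obj A))
              ((adj.unit.app B).toFunctor : ↑B ⥤ ↑(L.obj B)) ⋙ g)
        rw [h]))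
    exact Functor.curry_obj_injective hc
  have hc2 := cancelL L adj B (Y := Grpd.of (↑(L.obj A) ⥤ X))
    (Functor.curry.obj (CategoryTheory.Prod.swap ↑(L.obj B) ↑(L.obj A) ⋙ f))
    (Functor.curry.obj (CategoryTheory.Prod.swap ↑(L.obj B) ↑(L.obj A) ⋙ g))
    (Cat.ext (by
      show ((adj.unit.app B).toFunctor : ↑B ⥤ ↑(L.obj B)) ⋙
          Functor.curry.obj (CategoryTheory.Prod.swap ↑(L.obj B) ↑(L.obj A) ⋙ f)
        = ((adj.unit.app B).toFunctor : ↑B ⥤ ↑(L.obj B)) ⋙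
          Functor.curry.obj (CategoryTheory.Prod.swap ↑(L.obj B) ↑(L.obj A) ⋙ g)
      rw [comp_curry, comp_curry]
      show Functor.curry.obj (CategoryTheory.Prod.swap ↑B ↑(L.obj A) ⋙
            (((𝟭 ↑(L.obj A)).prod ((adj.unit.app B).toFunctor : ↑B ⥤ ↑(L.obj B))) ⋙ f))
        = Functor.curry.obj (CategoryTheory.Prod.swap ↑B ↑(L.obj A) ⋙
            (((𝟭 ↑(L.obj A)).prod ((adj.unit.app B).toFunctor : ↑B ⥤ ↑(L.obj B))) ⋙ g))
      rw [hW]))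
  have hsw := Functor.curry_obj_injective hc2
  calc f = CategoryTheory.Prod.swap ↑(L.obj A) ↑(L.obj B) ⋙
        (CategoryTheory.Prod.swap ↑(L.obj B) ↑(L.obj A) ⋙ f) := rfl
    _ = CategoryTheory.Prod.swap ↑(L.obj A) ↑(L.obj B) ⋙
        (CategoryTheory.Prod.swap ↑(L.obj B) ↑(L.obj A) ⋙ g) := by rw [hsw]
    _ = g := rfl

lemma hFG : Ffun L A B ⋙ Gfun L adj A B = 𝟭 ↑(L.obj (PC A B)) := by
  have h := cancelL L adj (PC A B) (Y := L.obj (PC A B))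
    (show L.obj (PC A B) ⟶ L.obj (PC A B) from Ffun L A B ⋙ Gfun L adj A B)
    (𝟙 (L.obj (PC A B)))
    (Cat.ext (by
      show (((adj.unit.app (PC A B)).toFunctor : ↑(PC A B) ⥤ ↑(L.obj (PC A B))) ⋙ Ffun L A B) ⋙
          Gfun L adj A B = ((adj.unit.app (PC A B)).toFunctor : ↑(PC A B) ⥤ ↑(L.obj (PC A B)))
      erw [c1, c2]))
  exact h

lemma hGF : Gfun L adj A B ⋙ Ffun L A B = 𝟭 (↑(L.obj A) × ↑(L.obj B)) := by
  apply prodCancel L adj A B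
  show (Functor.prod ((adj.unit.app A).toFunctor : ↑A ⥤ ↑(L.obj A))
        ((adj.unit.app B).toFunctor : ↑B ⥤ ↑(L.obj B)) ⋙ Gfun L adj A B) ⋙ Ffun L A B
    = Functor.prod ((adj.unit.app A).toFunctor : ↑A ⥤ ↑(L.obj A))
        ((adj.unit.app B).toFunctor : ↑B ⥤ ↑(L.obj B)) ⋙ 𝟭 _
  erw [c2, c1]
  rfl

end GroupoidificationAux

open GroupoidificationAux

/-!
STATEMENT 11: For any small categories `A` and `B`, the free groupoid completion (the left
adjoint `~(-) : Cat ⨥ Grpd` of the inclusion `Grpd ↪ Cat`, localizing at all morphisms)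
preserves binary products: there is a (natural) isomorphism of categories
`~(A × B) ≅ ~A × ~B`.
-/

theorem groupoidification_preserves_products
    (L : Cat.{u, u} ⥤ Grpd.{u, u}) (adj : L ⊣ Grpd.forgetToCat.{u, u})
    (A B : Cat.{u, u}) :
    Nonempty (Grpd.forgetToCat.obj (L.obj (Cat.of (↑A × ↑B))) ≅
      Cat.of (↑(L.obj A) × ↑(L.obj B))) := by
  exact ⟨{ hom := (Ffun L A B).toCatHom
           inv := (Gfun L adj A B).toCatHom
           hom_inv_id := Cat.ext (hFG L adj A B)
           inv_hom_id := Cat.ext (hGF L adj A B) }⟩
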